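/- Let α ∈ (0,1), δ > 0, and β₀ > 0 with β₀·δ < log(1/α). Let K ∈ ℕ and let β₀ < β₁ < … < β_K be defined by the recursion β_{k+1} = β_k·log(1/α) / ( log(1/α) − β_k·δ ), where β_k·δ < log(1/α) for all k < K, and assume β_K ≥ log(1/α)/δ. Let f : [0,∞) → ℝ be nonincreasing. Then max_{0≤k≤K} ( f(β_k) + β_k⁻¹·log α ) ≤ sup_{β>0} ( f(β) + β⁻¹·log α ) ≤ max_{0≤k≤K} ( f(β_k) + β_k⁻¹·log α ) + max{ f(0) − f(β₀), δ }. -/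

import Mathlib

set_option autoImplicit false

open Finset

/-- Grid approximation of the EVaR supremum: with the grid `β₀ < β₁ < … < β_K` generated by
the recursion `β_{k+1} = β_k log(1/α) / (log(1/α) − β_k δ)` with `β_K ≥ log(1/α)/δ`, for any
nonincreasing `f : [0,∞) → ℝ`,
`max_k (f(β_k) + β_k⁻¹ log α) ≤ sup_{β>0} (f(β) + β⁻¹ log α)
  ≤ max_k (f(β_k) + β_k⁻¹ log α) + max{f(0) − f(β₀), δ}`. -/
theorem evar_grid_approximation (α δ : ℝ) (hα : α ∈ Set.Ioo (0 : ℝ) 1) (hδ : 0 < δ)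
    (K : ℕ) (B : ℕ → ℝ) (hB0 : 0 < B 0) (hB0δ : B 0 * δ < Real.log (1 / α))
    (hmono : ∀ k < K, B k < B (k + 1))
    (hdom : ∀ k < K, B k * δ < Real.log (1 / α))
    (hrec : ∀ k < K, B (k + 1) = B k * Real.log (1 / α) / (Real.log (1 / α) - B k * δ))
    (hK : Real.log (1 / α) / δ ≤ B K)
    (f : ℝ → ℝ) (hf : AntitoneOn f (Set.Ici 0)) :
    ((Finset.range (K + 1)).sup' Finset.nonempty_range_add_one
        fun k => f (B k) + (B k)⁻¹ * Real.log α) ≤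
      sSup {x : ℝ | ∃ b : ℝ, 0 < b ∧ x = f b + b⁻¹ * Real.log α} ∧
    sSup {x : ℝ | ∃ b : ℝ, 0 < b ∧ x = f b + b⁻¹ * Real.log α} ≤
      ((Finset.range (K + 1)).sup' Finset.nonempty_range_add_one
        fun k => f (B k) + (B k)⁻¹ * Real.log α) + max (f 0 - f (B 0)) δ := by
  obtain ⟨hα0, hα1⟩ := hα
  set L := Real.log (1 / α) with hLdef
  have hL : 0 < L := Real.log_pos (one_lt_one_div hα0 hα1)
  have hcL : Real.log α = -L := by
    rw [hLdef, one_div, Real.log_inv]; ring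
  have hc : Real.log α < 0 := by rw [hcL]; linarith
  -- positivity of the grid
  have Bpos : ∀ k, k ≤ K → 0 < B k := by
    intro k
    induction k with
    | zero => intro _; exact hB0
    | succ n ih =>
      intro hn
      have hnK : n < K := Nat.lt_of_succ_le hn
      exact lt_trans (ih hnK.le) (hmono n hnK)
  -- key step identity
  have hstep : ∀ k, k < K →
      (B (k + 1))⁻¹ * Real.log α = (B k)⁻¹ * Real.log α + δ := by
    intro k hk
    have hBk : 0 < B k := Bpos k hk.le
    have hden : 0 < L - B k * δ := by linarith [hdom k hk]
    have h1 : (B (k + 1))⁻¹ = (L - B k * δ) / (B k * L) := by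
      rw [hrec k hk, inv_div]
    rw [h1, hcL]
    field_simp
    ring
  set M := ((Finset.range (K + 1)).sup' Finset.nonempty_range_add_one
      fun k => f (B k) + (B k)⁻¹ * Real.log α) with hM
  have hgridM : ∀ k, k ≤ K → f (B k) + (B k)⁻¹ * Real.log α ≤ M := by
    intro k hk
    exact Finset.le_sup' (fun k => f (B k) + (B k)⁻¹ * Real.log α)
      (Finset.mem_range.2 (Nat.lt_succ_of_le hk))
  have hbdd : BddAbove {x : ℝ | ∃ b : ℝ, 0 < b ∧ x = f b + b⁻¹ * Real.log α} := by
    refine ⟨f 0, ?_⟩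
    rintro x ⟨b, hb, rfl⟩
    have h1 : f b ≤ f 0 := hf (Set.mem_Ici.2 le_rfl) (Set.mem_Ici.2 hb.le) hb.le
    have h2 : b⁻¹ * Real.log α ≤ 0 :=
      mul_nonpos_of_nonneg_of_nonpos (inv_nonneg.2 hb.le) hc.le
    linarith
  have hne : Set.Nonempty {x : ℝ | ∃ b : ℝ, 0 < b ∧ x = f b + b⁻¹ * Real.log α} :=
    ⟨f (B 0) + (B 0)⁻¹ * Real.log α, B 0, hB0, rfl⟩
  constructor
  · apply Finset.sup'_le
    intro k hk
    have hkK : k ≤ K := Nat.lt_succ_iff.1 (Finset.mem_range.1 hk)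
    exact le_csSup hbdd ⟨B k, Bpos k hkK, rfl⟩
  · apply csSup_le hne
    rintro x ⟨b, hb, rfl⟩
    -- the interval-finding lemma
    have hfind : ∀ n, n ≤ K → B 0 ≤ b → b < B n →
        ∃ k, k < K ∧ B k ≤ b ∧ b ≤ B (k + 1) := by
      intro n
      induction n with
      | zero => intro _ h0 hlt; exact absurd (lt_of_le_of_lt h0 hlt) (lt_irrefl _)
      | succ m ih =>
        intro hmK h0 hlt
        by_cases hcase : B m ≤ b
        · exact ⟨m, Nat.lt_of_succ_le hmK, hcase, hlt.le⟩
        · exact ih (Nat.le_of_succ_le hmK) h0 (lt_of_not_ge hcase)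
    by_cases h0 : b ≤ B 0
    · -- left of the grid
      have hfb : f b ≤ f 0 := hf (Set.mem_Ici.2 le_rfl) (Set.mem_Ici.2 hb.le) hb.le
      have hinv : (B 0)⁻¹ ≤ b⁻¹ := inv_anti₀ hb h0
      have h2 : b⁻¹ * Real.log α ≤ (B 0)⁻¹ * Real.log α :=
        mul_le_mul_of_nonpos_right hinv hc.le
      have hg := hgridM 0 (Nat.zero_le K)
      have hmax : f 0 - f (B 0) ≤ max (f 0 - f (B 0)) δ := le_max_left _ _
      linarith
    · push_neg at h0
      by_cases hK' : B K ≤ b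
      · -- right of the grid
        have hBK : 0 < B K := Bpos K le_rfl
        have hfb : f b ≤ f (B K) :=
          hf (Set.mem_Ici.2 hBK.le) (Set.mem_Ici.2 hb.le) hK'
        have h2 : b⁻¹ * Real.log α ≤ 0 :=
          mul_nonpos_of_nonneg_of_nonpos (inv_nonneg.2 hb.le) hc.le
        have hLBK : L ≤ B K * δ := (div_le_iff₀ hδ).1 hK
        have h3 : (B K)⁻¹ * L ≤ δ := by
          rw [inv_mul_le_iff₀ hBK]
          linarith [mul_comm (B K) δ]
        have h4 : -δ ≤ (B K)⁻¹ * Real.log α := by rw [hcL]; nlinarith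
        have hg := hgridM K le_rfl
        have hmax : δ ≤ max (f 0 - f (B 0)) δ := le_max_right _ _
        linarith
      · push_neg at hK'
        obtain ⟨k, hk, hk1, hk2⟩ := hfind K le_rfl h0.le hK'
        have hBk : 0 < B k := Bpos k hk.le
        have hBk1 : 0 < B (k + 1) := Bpos (k + 1) hk
        have hfb : f b ≤ f (B k) :=
          hf (Set.mem_Ici.2 hBk.le) (Set.mem_Ici.2 hb.le) hk1
        have hinv : (B (k + 1))⁻¹ ≤ b⁻¹ := inv_anti₀ hb hk2
        have h2 : b⁻¹ * Real.log α ≤ (B (k + 1))⁻¹ * Real.log α :=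
          mul_le_mul_of_nonpos_right hinv hc.le
        have h3 := hstep k hk
        have hg := hgridM k hk.le
        have hmax : δ ≤ max (f 0 - f (B 0)) δ := le_max_right _ _
        linarith
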